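/- Let λ > 0 be an irrational real number and define the vector field f₀ : ℝ² → ℝ² by f₀(x,y) = (−2λy(x²+y²) − 2y(2x²+y²), 4λx(x²+y²) + 2x(2x²+y²)). Then there exists no nonconstant polynomial V ∈ ℝ[x,y] satisfying (∂V/∂x)·f₀₁ + (∂V/∂y)·f₀₂ = 0 identically, where f₀ = (f₀₁, f₀₂). -/

import Mathlib

open MvPolynomial

namespace NoPFI

noncomputable section

abbrev R2 := MvPolynomial (Fin 2) ℝ

/-- Chain rule for a "derivation-like" map along a substitution. -/
lemma chain_rule (d : R2 → R2)
    (hC : ∀ a : ℝ, d (C a) = 0)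
    (hadd : ∀ p q, d (p + q) = d p + d q)
    (hmul : ∀ p q, d (p * q) = d p * q + p * d q)
    (g : Fin 2 → R2) (p : R2) :
    d (aeval g p) = aeval g (pderiv 0 p) * d (g 0) + aeval g (pderiv 1 p) * d (g 1) := by
  induction p using MvPolynomial.induction_on with
  | C a =>
      simp only [aeval_C, pderiv_C, map_zero, zero_mul, add_zero]
      have : (algebraMap ℝ R2) a = C a := rfl
      rw [this, hC]
  | add p q hp hq =>
      simp only [map_add, hadd, hp, hq]
      ring
  | mul_X p n hp =>
      have h1 : aeval g (p * X n) = aeval g p * g n := by simp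
      rw [h1, hmul, hp]
      have h2 : ∀ j : Fin 2, pderiv j (p * X n)
          = pderiv j p * X n + p * pderiv j (X n) := fun j => pderiv_mul
      rw [h2 0, h2 1]
      fin_cases n <;>
        simp [pderiv_X, map_add, map_mul] <;> ring

end

end NoPFI

namespace NoPFI
noncomputable section


lemma monomial_eq_two (n : Fin 2 →₀ ℕ) (c : ℝ) :
    (monomial n c : R2) = C c * X 0 ^ (n 0) * X 1 ^ (n 1) := by
  rw [monomial_eq, Finsupp.prod_fintype]
  · rw [Fin.prod_univ_two, mul_assoc]
  · intro i; exact pow_zero _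

lemma X_mul_pderiv_monomial (i : Fin 2) (n : Fin 2 →₀ ℕ) (c : ℝ) :
    X i * pderiv i (monomial n c) = monomial n ((n i : ℝ) * c) := by
  rw [pderiv_monomial]
  rcases Nat.eq_zero_or_pos (n i) with h | h
  · simp [h]
  · rw [X, monomial_mul]
    rw [add_tsub_cancel_of_le (by
      intro j
      classical
      by_cases hj : j = i
      · subst hj; simpa [Finsupp.single_apply] using Nat.succ_le_of_lt h
      · simp [Finsupp.single_apply, Ne.symm hj] : Finsupp.single i 1 ≤ n)]
    rw [one_mul, mul_comm c _]

end
end NoPFI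

namespace NoPFI
noncomputable section

/-- The operator `Q ↦ C λ * (X 0 * ∂₀ Q) - X 1 * ∂₁ Q` is diagonal on monomials. -/
lemma eigen_sum (lam : ℝ) (Q : R2) :
    C lam * (X 0 * pderiv 0 Q) - X 1 * pderiv 1 Q
      = ∑ n ∈ Q.support, monomial n ((lam * n 0 - n 1) * coeff n Q) := by
  conv_lhs => rw [Q.as_sum]
  rw [map_sum, map_sum, Finset.mul_sum, Finset.mul_sum, Finset.mul_sum, ← Finset.sum_sub_distrib]
  refine Finset.sum_congr rfl fun n _ => ?_
  rw [X_mul_pderiv_monomial, X_mul_pderiv_monomial, C_mul_monomial, ← map_sub (monomial n)]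
  congr 1
  ring

lemma eigen_coeff (lam : ℝ) (Q : R2)
    (h : C lam * (X 0 * pderiv 0 Q) - X 1 * pderiv 1 Q = 0)
    (m : Fin 2 →₀ ℕ) (hm : m ∈ Q.support) :
    (lam * m 0 - m 1) * coeff m Q = 0 := by
  have h2 := congrArg (coeff m) ((eigen_sum lam Q).symm.trans h)
  rw [coeff_sum] at h2
  rw [Finset.sum_eq_single m (fun n _ hnm => by rw [coeff_monomial, if_neg hnm])
    (fun hm' => absurd hm hm')] at h2
  rwa [coeff_monomial, if_pos rfl] at h2

/-- coefficientwise description of the sign-flip substitutions -/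
lemma coeff_flip (e0 e1 : ℝ) (p : R2) (m : Fin 2 →₀ ℕ) :
    coeff m (aeval ![C e0 * X 0, C e1 * X 1] p) = e0 ^ m 0 * e1 ^ m 1 * coeff m p := by
  induction p using MvPolynomial.induction_on' with
  | monomial n a =>
      have : aeval ![C e0 * X 0, C e1 * X 1] (monomial n a)
          = monomial n (e0 ^ n 0 * e1 ^ n 1 * a) := by
        rw [aeval_monomial, Finsupp.prod_fintype _ _ (fun i => pow_zero _), Fin.prod_univ_two]
        simp only [Matrix.cons_val_zero, Matrix.cons_val_one, Matrix.head_cons]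
        rw [mul_pow, mul_pow, ← C_pow, ← C_pow]
        have : (algebraMap ℝ R2) a = C a := rfl
        rw [this, monomial_eq_two n, map_mul, map_mul]
        ring
      rw [this, coeff_monomial, coeff_monomial]
      by_cases hnm : n = m
      · subst hnm; simp
      · simp [hnm]
  | add p q hp hq => rw [map_add, coeff_add, hp, hq, coeff_add]; ring

end
end NoPFI

namespace NoPFI
noncomputable section

lemma aeval_sq_monomial (n : Fin 2 →₀ ℕ) (c : ℝ) :
    aeval ![X 0 ^ 2, X 1 ^ 2] (monomial n c) = (monomial (n + n) c : R2) := by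
  rw [aeval_monomial, Finsupp.prod_fintype _ _ (fun i => pow_zero _), Fin.prod_univ_two]
  simp only [Matrix.cons_val_zero, Matrix.cons_val_one, Matrix.head_cons]
  have : (algebraMap ℝ R2) c = C c := rfl
  rw [this, monomial_eq_two (n + n), Finsupp.add_apply, Finsupp.add_apply,
    ← pow_mul, ← pow_mul]
  ring_nf

lemma aeval_sq_injective (P : R2) (h : aeval ![(X 0 : R2) ^ 2, X 1 ^ 2] P = 0) : P = 0 := by
  ext m
  have h2 : coeff (m + m) (aeval ![(X 0 : R2) ^ 2, X 1 ^ 2]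
      (∑ n ∈ P.support, monomial n (coeff n P))) = 0 := by
    rw [← P.as_sum, h, coeff_zero]
  rw [map_sum, coeff_sum] at h2
  have h3 : ∀ n ∈ P.support, coeff (m + m) (aeval ![(X 0 : R2) ^ 2, X 1 ^ 2] (monomial n (coeff n P)))
      = if n = m then coeff n P else 0 := by
    intro n _
    rw [aeval_sq_monomial, coeff_monomial]
    have hiff : (n + n = m + m) ↔ (n = m) := by
      constructor
      · intro he
        ext i
        have := DFunLike.congr_fun he i
        simp only [Finsupp.add_apply] at this
        omega
      · rintro rfl; rfl
    rw [if_congr hiff rfl rfl]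
  rw [Finset.sum_congr rfl h3] at h2
  rw [coeff_zero]
  by_cases hm : m ∈ P.support
  · rw [Finset.sum_eq_single m (fun n _ hnm => if_neg hnm) (fun h' => absurd hm h')] at h2
    rw [if_pos rfl] at h2
    simpa using h2
  · simpa using hm

/-- composition of two substitutions -/
lemma aeval_aeval (g h : Fin 2 → R2) (p : R2) :
    aeval g (aeval h p) = aeval (fun i => aeval g (h i)) p := by
  induction p using MvPolynomial.induction_on with
  | C a => simp
  | add p q hp hq => rw [map_add, map_add, map_add, hp, hq]
  | mul_X p n hp => rw [map_mul, map_mul, map_mul, hp, aeval_X, aeval_X]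

lemma eq_C_of_support (Q : R2) (h : ∀ m ∈ Q.support, m = 0) :
    Q = C (coeff 0 Q) := by
  ext m
  by_cases hm : m = 0
  · subst hm; simp [coeff_C]
  · rw [coeff_C, if_neg (by exact fun he => hm he.symm)]
    by_cases hs : m ∈ Q.support
    · exact absurd (h m hs) hm
    · simpa using hs

end
end NoPFI

namespace NoPFI
noncomputable section

/-- If a product of polynomials is a nonzero constant, each factor is constant. -/
lemma eq_C_of_mul_eq_C : ∀ (n : ℕ) (p q : MvPolynomial (Fin n) ℝ) (c : ℝ), c ≠ 0 →
    p * q = C c → ∃ a : ℝ, p = C a := by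
  intro n
  induction n with
  | zero =>
      intro p q c _ _
      exact ⟨constantCoeff p, (eq_C_of_isEmpty p)⟩
  | succ n ih =>
      intro p q c hc h
      set e := finSuccEquiv ℝ n with he
      have hmul : e p * e q = Polynomial.C (C c) := by
        rw [← map_mul, h]
        simp [he, finSuccEquiv_apply]
      have hp0 : e p ≠ 0 := by
        intro h0
        rw [h0, zero_mul] at hmul
        exact hc (by simpa using (C_eq_zero.mp (Polynomial.C_injective (R := MvPolynomial (Fin n) ℝ) (by simpa using hmul.symm))))
      have hq0 : e q ≠ 0 := by
        intro h0
        rw [h0, mul_zero] at hmul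
        exact hc (by simpa using (C_eq_zero.mp (Polynomial.C_injective (R := MvPolynomial (Fin n) ℝ) (by simpa using hmul.symm))))
      have hdeg : (e p).natDegree = 0 := by
        have := Polynomial.natDegree_mul hp0 hq0
        rw [hmul, Polynomial.natDegree_C] at this
        omega
      have hpC : e p = Polynomial.C ((e p).coeff 0) := Polynomial.eq_C_of_natDegree_eq_zero hdeg
      have hqC : e q = Polynomial.C ((e q).coeff 0) :=
        Polynomial.eq_C_of_natDegree_eq_zero (by
          have := Polynomial.natDegree_mul hp0 hq0
          rw [hmul, Polynomial.natDegree_C] at this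
          omega)
      have hprod : ((e p).coeff 0) * ((e q).coeff 0) = C c := by
        apply Polynomial.C_injective (R := MvPolynomial (Fin n) ℝ)
        rw [map_mul, ← hpC, ← hqC, hmul]
      obtain ⟨a, ha⟩ := ih ((e p).coeff 0) ((e q).coeff 0) c hc hprod
      refine ⟨a, ?_⟩
      apply e.injective
      rw [hpC, ha]
      simp [he, finSuccEquiv_apply]

end
end NoPFI

set_option maxHeartbeats 2000000 in
open NoPFI in
theorem no_nonconstant_polynomial_first_integral
    (lam : ℝ) (hlam : 0 < lam) (hirr : Irrational lam)
    (f1 f2 : MvPolynomial (Fin 2) ℝ)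
    (hf1 : f1 = C (-2*lam) * X 1 * (X 0 ^ 2 + X 1 ^ 2)
      - 2 * X 1 * (2 * X 0 ^ 2 + X 1 ^ 2))
    (hf2 : f2 = C (4*lam) * X 0 * (X 0 ^ 2 + X 1 ^ 2)
      + 2 * X 0 * (2 * X 0 ^ 2 + X 1 ^ 2)) :
    ∀ V : MvPolynomial (Fin 2) ℝ,
      pderiv 0 V * f1 + pderiv 1 V * f2 = 0 → ∃ c : ℝ, V = C c := by
  intro V hV
  classical
  set s1 : Fin 2 → R2 := ![-X 0, X 1] with hs1def
  set s2 : Fin 2 → R2 := ![X 0, -X 1] with hs2def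
  set rs : Fin 2 → R2 := ![X 0^2 + X 1^2, 2*X 0^2 + X 1^2] with hrsdef
  have hs10 : s1 0 = -X 0 := rfl
  have hs11 : s1 1 = X 1 := rfl
  have hs20 : s2 0 = X 0 := rfl
  have hs21 : s2 1 = -X 1 := rfl
  have hrs0 : rs 0 = X 0^2 + X 1^2 := rfl
  have hrs1 : rs 1 = 2*X 0^2 + X 1^2 := rfl
  set D : R2 → R2 := fun p => pderiv 0 p * f1 + pderiv 1 p * f2 with hD
  have hDC : ∀ a : ℝ, D (C a) = 0 := fun a => by simp [hD]
  have hDadd : ∀ p q : R2, D (p + q) = D p + D q := fun p q => by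
    simp only [hD, map_add]; ring
  have hDmul : ∀ p q : R2, D (p * q) = D p * q + p * D q := fun p q => by
    simp only [hD, pderiv_mul]; ring
  have hDmul0 : ∀ p q : R2, D p = 0 → D q = 0 → D (p * q) = 0 := fun p q hp hq => by
    rw [hDmul, hp, hq]; ring
  -- symmetry of the vector field
  have hs1f1 : aeval s1 f1 = f1 := by
    rw [hf1]
    simp only [map_sub, map_mul, map_add, map_pow, map_ofNat, aeval_X, aeval_C,
      algebraMap_eq, hs10, hs11]
    ring
  have hs1f2 : aeval s1 f2 = -f2 := by
    rw [hf2]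
    simp only [map_add, map_mul, map_pow, map_ofNat, aeval_X, aeval_C,
      algebraMap_eq, hs10, hs11]
    ring
  have hs2f1 : aeval s2 f1 = -f1 := by
    rw [hf1]
    simp only [map_sub, map_mul, map_add, map_pow, map_ofNat, aeval_X, aeval_C,
      algebraMap_eq, hs20, hs21]
    ring
  have hs2f2 : aeval s2 f2 = f2 := by
    rw [hf2]
    simp only [map_add, map_mul, map_pow, map_ofNat, aeval_X, aeval_C,
      algebraMap_eq, hs20, hs21]
    ring
  have hDX0 : D (X 0) = f1 := by
    simp [hD, pderiv_X]
  have hDX1 : D (X 1) = f2 := by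
    simp [hD, pderiv_X]
  have hDneg : ∀ p : R2, D (-p) = -D p := fun p => by
    simp only [hD, map_neg]; ring
  -- substitutions preserve solutions
  have hsol1 : ∀ p : R2, D p = 0 → D (aeval s1 p) = 0 := by
    intro p hp
    rw [chain_rule D hDC hDadd hDmul s1 p, hs10, hs11, hDneg, hDX0, hDX1]
    have h2 := congrArg (aeval s1) hp
    rw [map_add, map_mul, map_mul, hs1f1, hs1f2, map_zero] at h2
    linear_combination -h2
  have hsol2 : ∀ p : R2, D p = 0 → D (aeval s2 p) = 0 := by
    intro p hp
    rw [chain_rule D hDC hDadd hDmul s2 p, hs20, hs21, hDneg, hDX0, hDX1]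
    have h2 := congrArg (aeval s2) hp
    rw [map_add, map_mul, map_mul, hs2f1, hs2f2, map_zero] at h2
    linear_combination -h2
  -- involutions and commutation
  have hinv1 : ∀ p : R2, aeval s1 (aeval s1 p) = p := by
    intro p
    rw [aeval_aeval]
    have he : (fun i => aeval s1 (s1 i)) = (X : Fin 2 → R2) := by
      funext i; fin_cases i <;> simp [hs10, hs11]
    rw [he, aeval_X_left_apply]
  have hinv2 : ∀ p : R2, aeval s2 (aeval s2 p) = p := by
    intro p
    rw [aeval_aeval]
    have he : (fun i => aeval s2 (s2 i)) = (X : Fin 2 → R2) := by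
      funext i; fin_cases i <;> simp [hs20, hs21]
    rw [he, aeval_X_left_apply]
  have hcomm : ∀ p : R2, aeval s2 (aeval s1 p) = aeval s1 (aeval s2 p) := by
    intro p
    rw [aeval_aeval, aeval_aeval]
    have he : (fun i => aeval s2 (s1 i)) = (fun i => aeval s1 (s2 i)) := by
      funext i; fin_cases i <;> simp [hs10, hs11, hs20, hs21]
    rw [he]
  set W : R2 := V * aeval s1 V * (aeval s2 V * aeval s2 (aeval s1 V)) with hWdef
  have hDW : D W = 0 := by
    apply hDmul0
    · exact hDmul0 _ _ hV (hsol1 V hV)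
    · exact hDmul0 _ _ (hsol2 V hV) (hsol2 _ (hsol1 V hV))
  have hW1 : aeval s1 W = W := by
    have e1 : aeval s1 (aeval s1 V) = V := hinv1 V
    have e2 : aeval s1 (aeval s2 V) = aeval s2 (aeval s1 V) := (hcomm V).symm
    have e3 : aeval s1 (aeval s2 (aeval s1 V)) = aeval s2 V := by
      rw [← hcomm (aeval s1 V), hinv1]
    rw [hWdef, map_mul, map_mul, map_mul, e1, e2, e3]
    ring
  have hW2 : aeval s2 W = W := by
    have e4 : aeval s2 (aeval s2 V) = V := hinv2 V
    have e5 : aeval s2 (aeval s2 (aeval s1 V)) = aeval s1 V := hinv2 _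
    rw [hWdef, map_mul, map_mul, map_mul, e4, e5]
    ring
  -- W has only even exponents
  have hWeven : ∀ m : Fin 2 →₀ ℕ, coeff m W ≠ 0 → Even (m 0) ∧ Even (m 1) := by
    intro m hm
    constructor
    · rcases Nat.even_or_odd (m 0) with h | h
      · exact h
      · exfalso
        have hs1e : s1 = ![C (-1 : ℝ) * X 0, C (1 : ℝ) * X 1] := by
          funext i; fin_cases i <;> simp [hs10, hs11]
        have := congrArg (coeff m) hW1
        rw [hs1e, coeff_flip] at this
        rw [Odd.neg_one_pow h, one_pow] at this
        simp only [neg_one_mul, one_mul] at this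
        exact hm (by linarith)
    · rcases Nat.even_or_odd (m 1) with h | h
      · exact h
      · exfalso
        have hs2e : s2 = ![C (1 : ℝ) * X 0, C (-1 : ℝ) * X 1] := by
          funext i; fin_cases i <;> simp [hs20, hs21]
        have := congrArg (coeff m) hW2
        rw [hs2e, coeff_flip] at this
        rw [Odd.neg_one_pow h, one_pow] at this
        simp only [neg_one_mul, one_mul] at this
        exact hm (by linarith)
  -- represent W as a polynomial in X 0 ^ 2, X 1 ^ 2
  set half : (Fin 2 →₀ ℕ) → (Fin 2 →₀ ℕ) :=
    fun n => Finsupp.mapRange (· / 2) (Nat.zero_div 2) n with hhalf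
  set P : R2 := ∑ n ∈ W.support, monomial (half n) (coeff n W) with hPdef
  have hP : aeval ![(X 0 : R2)^2, X 1^2] P = W := by
    rw [hPdef, map_sum]
    have hterm : ∀ n ∈ W.support,
        aeval ![(X 0 : R2)^2, X 1^2] (monomial (half n) (coeff n W))
          = monomial n (coeff n W) := by
      intro n hn
      rw [aeval_sq_monomial]
      obtain ⟨h0, h1⟩ := hWeven n (mem_support_iff.mp hn)
      have hhn : half n + half n = n := by
        ext i
        rw [Finsupp.add_apply, hhalf]
        simp only [Finsupp.mapRange_apply]
        fin_cases i
        · obtain ⟨k, hk⟩ := h0; simp; omega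
        · obtain ⟨k, hk⟩ := h1; simp; omega
      rw [hhn]
    rw [Finset.sum_congr rfl hterm, ← W.as_sum]
  set Q : R2 := aeval ![(X 1 : R2) - X 0, 2*X 0 - X 1] P with hQdef
  have hQ : aeval rs Q = W := by
    rw [hQdef, aeval_aeval]
    have he : (fun i => aeval rs ((![(X 1 : R2) - X 0, 2*X 0 - X 1]) i))
        = ![(X 0 : R2)^2, X 1^2] := by
      funext i
      fin_cases i <;>
        · simp [hrs0, hrs1, map_ofNat]
          ring
    rw [he, hP]
  -- the key computation: D acts diagonally through the substitution rs
  have hC2 : (C (-2*lam) : R2) = -2 * C lam := by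
    rw [show (-2*lam : ℝ) = (-2 : ℝ) * lam from by ring, map_mul, map_neg, map_ofNat]
  have hC4 : (C (4*lam) : R2) = 4 * C lam := by
    rw [map_mul, map_ofNat]
  have p2 : ∀ i : Fin 2, pderiv i (2 : R2) = 0 := fun i => by
    rw [(map_ofNat (C : ℝ →+* R2) 2).symm, pderiv_C]
  have hDr : D (rs 0) = C lam * (4 * (X 0 * X 1) * (X 0^2 + X 1^2)) := by
    rw [hrs0]
    simp only [hD, map_add, pderiv_mul, pderiv_pow, pderiv_X, p2]
    simp only [pderiv_X, hf1, hf2, hC2, hC4]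
    norm_num
    ring
  have hDs : D (rs 1) = -(4 * (X 0 * X 1) * (2*X 0^2 + X 1^2)) := by
    rw [hrs1]
    simp only [hD, map_add, pderiv_mul, pderiv_pow, pderiv_X, p2]
    simp only [pderiv_X, hf1, hf2, hC2, hC4]
    norm_num
    ring
  have h0 : aeval rs (pderiv 0 Q) * D (rs 0) + aeval rs (pderiv 1 Q) * D (rs 1) = 0 := by
    rw [← chain_rule D hDC hDadd hDmul rs Q, hQ, hDW]
  have hexp : (4 : R2) * (X 0 * X 1)
      * aeval rs (C lam * (X 0 * pderiv 0 Q) - X 1 * pderiv 1 Q) = 0 := by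
    rw [map_sub, map_mul, map_mul, map_mul, aeval_X, aeval_X, aeval_C, algebraMap_eq,
      hrs0, hrs1]
    rw [hDr, hDs] at h0
    linear_combination h0
  have hG : C lam * (X 0 * pderiv 0 Q) - X 1 * pderiv 1 Q = 0 := by
    set G : R2 := C lam * (X 0 * pderiv 0 Q) - X 1 * pderiv 1 Q with hGdef
    have h4XY : (4 : R2) * (X 0 * X 1) ≠ 0 := by
      apply mul_ne_zero
      · norm_num
      · exact mul_ne_zero (X_ne_zero 0) (X_ne_zero 1)
    have hGrs : aeval rs G = 0 := by
      rcases mul_eq_zero.mp hexp with h | h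
      · exact absurd h h4XY
      · exact h
    have h1 : aeval ![(X 0 : R2)^2, X 1^2] (aeval ![(X 0 : R2) + X 1, 2*X 0 + X 1] G) = 0 := by
      rw [aeval_aeval]
      have he : (fun i => aeval ![(X 0 : R2)^2, X 1^2] ((![(X 0 : R2) + X 1, 2*X 0 + X 1]) i))
          = rs := by
        funext i
        fin_cases i <;>
          · simp [hrs0, hrs1, map_ofNat]
            try ring
      rw [he]
      exact hGrs
    have h2 := aeval_sq_injective _ h1
    have h3 : aeval ![(X 1 : R2) - X 0, 2*X 0 - X 1]
        (aeval ![(X 0 : R2) + X 1, 2*X 0 + X 1] G) = G := by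
      rw [aeval_aeval]
      have he : (fun i => aeval ![(X 1 : R2) - X 0, 2*X 0 - X 1]
          ((![(X 0 : R2) + X 1, 2*X 0 + X 1]) i)) = (X : Fin 2 → R2) := by
        funext i
        fin_cases i <;>
          · simp [map_ofNat]
            ring
      rw [he, aeval_X_left_apply]
    rw [← h3, h2, map_zero]
  -- irrationality forces Q to be constant
  have hsupp : ∀ m ∈ Q.support, m = 0 := by
    intro m hm
    have h4 := eigen_coeff lam Q hG m hm
    have h5 : coeff m Q ≠ 0 := mem_support_iff.mp hm
    have h6 : lam * (m 0 : ℝ) - (m 1 : ℝ) = 0 := by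
      rcases mul_eq_zero.mp h4 with h | h
      · exact h
      · exact absurd h h5
    have h7 : m 0 = 0 := by
      by_contra hm0
      apply hirr
      refine ⟨(m 1 : ℚ) / (m 0 : ℚ), ?_⟩
      have hm0' : ((m 0 : ℚ) : ℝ) ≠ 0 := by
        exact_mod_cast Nat.cast_ne_zero.mpr hm0
      push_cast
      rw [div_eq_iff (by exact_mod_cast hm0')]
      push_cast at h6 ⊢
      linarith
    have h8 : m 1 = 0 := by
      rw [h7] at h6
      push_cast at h6
      have : (m 1 : ℝ) = 0 := by linarith
      exact_mod_cast this
    ext i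
    fin_cases i
    · simpa using h7
    · simpa using h8
  have hQC : Q = C (coeff 0 Q) := eq_C_of_support Q hsupp
  have hWC : W = C (coeff 0 Q) := by
    conv_lhs => rw [← hQ, hQC]
    rw [aeval_C, algebraMap_eq]
  -- conclude
  by_cases hV0 : V = 0
  · exact ⟨0, by rw [hV0, map_zero]⟩
  · have h1 : aeval s1 V ≠ 0 := fun h => hV0 (by rw [← hinv1 V, h, map_zero])
    have h2 : aeval s2 V ≠ 0 := fun h => hV0 (by rw [← hinv2 V, h, map_zero])
    have h21 : aeval s2 (aeval s1 V) ≠ 0 := fun h => h1 (by rw [← hinv2 (aeval s1 V), h, map_zero])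
    have hWne : W ≠ 0 := by
      rw [hWdef]
      exact mul_ne_zero (mul_ne_zero hV0 h1) (mul_ne_zero h2 h21)
    have hc0 : coeff 0 Q ≠ 0 := fun h => hWne (by rw [hWC, h, map_zero])
    refine eq_C_of_mul_eq_C 2 V (aeval s1 V * (aeval s2 V * aeval s2 (aeval s1 V)))
      (coeff 0 Q) hc0 ?_
    rw [show V * (aeval s1 V * (aeval s2 V * aeval s2 (aeval s1 V))) = W from by
      rw [hWdef]; ring, hWC]
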